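/- Let 𝒩 be a finite set of positive integers, let 𝔯 ⊆ [0,1] ∩ ℚ be a finite set with 0, 1 ∈ 𝔯, let Φ := Φ(𝔯), and let n ∈ 𝒩. Suppose b, b⁺ ∈ [0,1] are real numbers such that n·b⁺ ∈ ℤ and n·b⁺ ≥ ⌊(n+1){b_{𝒩_Φ}}⌋ + n·⌊b_{𝒩_Φ}⌋. Then n·b⁺ ≥ ⌊(n+1){b}⌋ + n·⌊b⌋. -/

import Mathlib

open scoped BigOperators

/-- The hyperstandard set `Φ(𝔯) = {1 - r/l | r ∈ 𝔯, l ∈ ℤ_{>0}} ∩ [0,1]` associated to a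
set of rationals `𝔯`. -/
def Phi (R : Set ℚ) : Set ℝ :=
  {x : ℝ | (∃ r ∈ R, ∃ l : ℕ, 0 < l ∧ x = 1 - (r : ℝ) / l) ∧ 0 ≤ x ∧ x ≤ 1}

/-- The set `Γ(𝒩, Φ(𝔯)) = {1 - r/l + (1/l)·Σ_{n∈𝒩} m_n/(n+1)} ∩ [0,1]`. -/
def Gamma (N : Finset ℕ) (R : Set ℚ) : Set ℝ :=
  {x : ℝ | (∃ r ∈ R, ∃ l : ℕ, 0 < l ∧ ∃ m : ℕ → ℕ,
      x = 1 - (r : ℝ) / l + (1 / (l : ℝ)) * ∑ n ∈ N, (m n : ℝ) / ((n : ℝ) + 1)) ∧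
    0 ≤ x ∧ x ≤ 1}

/-- If `n ∈ 𝒩`, `b, b⁺ ∈ [0,1]`, `n·b⁺ ∈ ℤ` and
`n·b⁺ ≥ ⌊(n+1){b_{𝒩_Φ}}⌋ + n·⌊b_{𝒩_Φ}⌋`, then `n·b⁺ ≥ ⌊(n+1){b}⌋ + n·⌊b⌋`. -/
theorem stmt1 (N : Finset ℕ) (hN : ∀ n ∈ N, 0 < n)
    (R : Set ℚ) (hRfin : R.Finite) (hRsub : R ⊆ Set.Icc 0 1)
    (h0R : (0 : ℚ) ∈ R) (h1R : (1 : ℚ) ∈ R)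
    (n : ℕ) (hnN : n ∈ N)
    (b bplus : ℝ) (hb : b ∈ Set.Icc (0 : ℝ) 1) (hbplus : bplus ∈ Set.Icc (0 : ℝ) 1)
    (hint : ∃ k : ℤ, (n : ℝ) * bplus = k)
    (bN : ℝ) (hbN : IsGreatest {b' ∈ Gamma N R | b' ≤ b} bN)
    (hineq : (n : ℝ) * bplus ≥ (⌊((n : ℝ) + 1) * Int.fract bN⌋ : ℝ) + (n : ℝ) * (⌊bN⌋ : ℝ)) :
    (n : ℝ) * bplus ≥ (⌊((n : ℝ) + 1) * Int.fract b⌋ : ℝ) + (n : ℝ) * (⌊b⌋ : ℝ) := by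
  obtain ⟨hb0, hb1⟩ := hb
  rcases eq_or_lt_of_le hb1 with hbeq | hblt
  · -- b = 1, show bN = 1
    have h1G : (1 : ℝ) ∈ Gamma N R := by
      refine ⟨⟨0, h0R, 1, one_pos, fun _ => 0, by simp⟩, by norm_num⟩
    have hle : (1 : ℝ) ≤ bN := hbN.2 ⟨h1G, by rw [← hbeq]⟩
    have hge : bN ≤ 1 := hbeq ▸ hbN.1.2
    have : bN = 1 := le_antisymm hge hle
    subst hbeq; rw [this] at hineq; exact hineq
  · -- b < 1
    have hbNmem := hbN.1
    have hbN0 : 0 ≤ bN := hbNmem.1.2.1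
    have hbNb : bN ≤ b := hbNmem.2
    have hbNlt : bN < 1 := lt_of_le_of_lt hbNb hblt
    have hfb : ⌊b⌋ = 0 := Int.floor_eq_zero_iff.2 ⟨hb0, hblt⟩
    have hfbN : ⌊bN⌋ = 0 := Int.floor_eq_zero_iff.2 ⟨hbN0, hbNlt⟩
    have hfrb : Int.fract b = b := Int.fract_eq_self.2 ⟨hb0, hblt⟩
    have hfrbN : Int.fract bN = bN := Int.fract_eq_self.2 ⟨hbN0, hbNlt⟩
    set j : ℤ := ⌊((n : ℝ) + 1) * b⌋ with hj
    have hn1pos : (0 : ℝ) < (n : ℝ) + 1 := by positivity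
    have hj0 : 0 ≤ j := Int.floor_nonneg.2 (by positivity)
    have hjle : (j : ℝ) ≤ ((n : ℝ) + 1) * b := Int.floor_le _
    -- j/(n+1) ∈ Gamma
    have hmem : (j : ℝ) / ((n : ℝ) + 1) ∈ Gamma N R := by
      refine ⟨⟨1, h1R, 1, one_pos,
        fun k => if k = n then j.toNat else 0, ?_⟩, by positivity, ?_⟩
      · have : ∑ k ∈ N, ((if k = n then (j.toNat : ℕ) else 0 : ℕ) : ℝ) / ((k : ℝ) + 1)
            = (j : ℝ) / ((n : ℝ) + 1) := by
          rw [Finset.sum_eq_single_of_mem n hnN]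
          · simp only [if_pos rfl]
            congr 1
            exact_mod_cast Int.toNat_of_nonneg hj0
          · intro k _ hk; simp [hk]
        rw [this]; push_cast; ring
      · rw [div_le_one hn1pos]
        calc (j : ℝ) ≤ ((n : ℝ) + 1) * b := hjle
          _ ≤ ((n : ℝ) + 1) * 1 := by
              exact mul_le_mul_of_nonneg_left hb1 (le_of_lt hn1pos)
          _ = (n : ℝ) + 1 := mul_one _
    have hjb : (j : ℝ) / ((n : ℝ) + 1) ≤ b := by
      rw [div_le_iff₀ hn1pos]; linarith [hjle]
    have hle : (j : ℝ) / ((n : ℝ) + 1) ≤ bN := hbN.2 ⟨hmem, hjb⟩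
    have hjbN : (j : ℝ) ≤ ((n : ℝ) + 1) * bN := by
      rw [div_le_iff₀ hn1pos] at hle; linarith
    have hjfl : j ≤ ⌊((n : ℝ) + 1) * bN⌋ := Int.le_floor.2 hjbN
    rw [hfrb, hfb]
    rw [hfrbN, hfbN] at hineq
    push_cast at hineq ⊢
    have : (j : ℝ) ≤ (⌊((n : ℝ) + 1) * bN⌋ : ℝ) := by exact_mod_cast hjfl
    linarith
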